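/- Let φ be an admissible self-map of T, and let S := {w ∈ T : φ⁻¹({w}) is infinite}. If S is nonempty and finite, and μ(v) → 0 as |v| → ∞ along v ∈ φ⁻¹(S) (i.e., for every ε > 0 there is N such that μ(v) < ε for all v ∈ φ⁻¹(S) with |v| ≥ N), then C_φ maps L⁰μ(T) into L⁰μ(T) and is a bounded operator on L⁰μ(T). -/

import Mathlib

open Filter Set Topology

/-- The weighted sup-norm `‖f‖_μ = sup_{v ∈ T} μ(v) |f(v)|`. -/
noncomputable def wnorm {T : Type*} (μ : T → ℝ) (f : T → ℂ) : ℝ :=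
  ⨆ v : T, μ v * ‖f v‖

/-- Membership in the weighted Banach space `Lμ(T)`: `sup_{v} μ(v)|f(v)| < ∞`. -/
def memL {T : Type*} (μ : T → ℝ) (f : T → ℂ) : Prop :=
  BddAbove (Set.range fun v : T => μ v * ‖f v‖)

/-- Membership in the little weighted Banach space `L⁰μ(T)`:
`f ∈ Lμ(T)` and `μ(v)|f(v)| → 0` as `|v| = d(o,v) → ∞`. -/
def memL0 {T : Type*} [MetricSpace T] (o : T) (μ : T → ℝ) (f : T → ℂ) : Prop :=
  memL μ f ∧ ∀ ε : ℝ, 0 < ε → ∃ N : ℝ, ∀ v : T, N ≤ dist o v → μ v * ‖f v‖ < ε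

/-- `φ` is admissible: `C_φ` is bounded on `Lμ(T)`, equivalently there is `C > 0`
with `μ(v) ≤ C μ(φ(v))` for all `v ∈ T`. -/
def Admissible {T : Type*} (μ : T → ℝ) (φ : T → T) : Prop :=
  ∃ C : ℝ, 0 < C ∧ ∀ v : T, μ v ≤ C * μ (φ v)

/-- `C_φ` maps `L⁰μ(T)` boundedly into `L⁰μ(T)`. -/
def CompBoundedL0 {T : Type*} [MetricSpace T] (o : T) (μ : T → ℝ) (φ : T → T) : Prop :=
  (∀ f : T → ℂ, memL0 o μ f → memL0 o μ (f ∘ φ)) ∧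
    ∃ C : ℝ, ∀ f : T → ℂ, memL0 o μ f → wnorm μ (f ∘ φ) ≤ C * wnorm μ f

/-- Let `φ` be admissible and `S := {w ∈ T : φ⁻¹({w}) is infinite}`.
If `S` is nonempty and finite, and `μ(v) → 0` as `|v| → ∞` along `v ∈ φ⁻¹(S)`, then
`C_φ` maps `L⁰μ(T)` into `L⁰μ(T)` and is a bounded operator on `L⁰μ(T)`. -/
theorem stmt_11 {T : Type*} [MetricSpace T] (o : T)
    (hloc : ∀ M : ℝ, {v : T | dist o v ≤ M}.Finite)
    (hunb : ∀ M : ℝ, ∃ v : T, M < dist o v)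
    (μ : T → ℝ) (hμ : ∀ v : T, 0 < μ v) (φ : T → T)
    (hadm : Admissible μ φ)
    (S : Set T) (hS : S = {w : T | (φ ⁻¹' {w}).Infinite})
    (hSne : S.Nonempty) (hSfin : S.Finite)
    (hμ0 : ∀ ε : ℝ, 0 < ε → ∃ N : ℝ, ∀ v ∈ φ ⁻¹' S, N ≤ dist o v → μ v < ε) :
    CompBoundedL0 o μ φ := by
  obtain ⟨C, hC, hCle⟩ := hadm
  obtain ⟨w0, hw0⟩ := hSne
  haveI : Nonempty T := ⟨w0⟩
  have key : ∀ (f : T → ℂ) (v : T), μ v * ‖f (φ v)‖ ≤ C * (μ (φ v) * ‖f (φ v)‖) := by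
    intro f v
    calc μ v * ‖f (φ v)‖ ≤ (C * μ (φ v)) * ‖f (φ v)‖ :=
          mul_le_mul_of_nonneg_right (hCle v) (norm_nonneg _)
      _ = C * (μ (φ v) * ‖f (φ v)‖) := by ring
  constructor
  · rintro f ⟨⟨B0, hB0⟩, hf0⟩
    have hterm : ∀ v, μ v * ‖(f ∘ φ) v‖ ≤ C * B0 := fun v =>
      (key f v).trans (mul_le_mul_of_nonneg_left (hB0 ⟨φ v, rfl⟩) hC.le)
    refine ⟨⟨C * B0, ?_⟩, ?_⟩
    · rintro x ⟨v, rfl⟩; exact hterm v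
    · intro ε hε
      obtain ⟨B, hB⟩ := (hSfin.image (fun w => ‖f w‖)).bddAbove
      have hB1 : 0 < B + 1 := by
        have h0 := hB ⟨w0, hw0, rfl⟩
        have := norm_nonneg (f w0)
        linarith
      obtain ⟨N1, hN1⟩ := hμ0 (ε / (B + 1)) (div_pos hε hB1)
      obtain ⟨M, hM⟩ := hf0 (ε / C) (div_pos hε hC)
      have hfin : ({v : T | φ v ∉ S ∧ dist o (φ v) ≤ M}).Finite := by
        have hsub : {v : T | φ v ∉ S ∧ dist o (φ v) ≤ M} ⊆
            ⋃ w ∈ ({w : T | dist o w ≤ M} \ S), φ ⁻¹' {w} := by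
          rintro v ⟨h1, h2⟩
          exact Set.mem_biUnion ⟨h2, h1⟩ rfl
        refine Set.Finite.subset (Set.Finite.biUnion ((hloc M).diff) ?_) hsub
        intro w hw
        have : ¬ (φ ⁻¹' {w}).Infinite := by
          intro hinf
          exact hw.2 (by rw [hS]; exact hinf)
        exact Set.not_infinite.mp this
      obtain ⟨N2, hN2⟩ := (hfin.image (dist o)).bddAbove
      refine ⟨max N1 (N2 + 1), fun v hv => ?_⟩
      by_cases hvS : φ v ∈ S
      · have hμv : μ v < ε / (B + 1) :=
          hN1 v hvS (le_trans (le_max_left _ _) hv)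
        have hfb : ‖f (φ v)‖ ≤ B := hB ⟨φ v, hvS, rfl⟩
        have hfb' : ‖(f ∘ φ) v‖ ≤ B + 1 := by
          simp only [Function.comp_apply]; linarith
        calc μ v * ‖(f ∘ φ) v‖ ≤ μ v * (B + 1) :=
              mul_le_mul_of_nonneg_left hfb' (hμ v).le
          _ < (ε / (B + 1)) * (B + 1) := by
              apply mul_lt_mul_of_pos_right hμv hB1
          _ = ε := div_mul_cancel₀ ε (ne_of_gt hB1)
      · have hnot : v ∉ {v : T | φ v ∉ S ∧ dist o (φ v) ≤ M} := by
          intro hmem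
          have := hN2 ⟨v, hmem, rfl⟩
          have hv2 : N2 + 1 ≤ dist o v := le_trans (le_max_right _ _) hv
          linarith
        have hdist : M ≤ dist o (φ v) := by
          by_contra h
          exact hnot ⟨hvS, (not_le.mp h).le⟩
        have hsmall : μ (φ v) * ‖f (φ v)‖ < ε / C := hM (φ v) hdist
        calc μ v * ‖(f ∘ φ) v‖ ≤ C * (μ (φ v) * ‖f (φ v)‖) := key f v
          _ < C * (ε / C) := mul_lt_mul_of_pos_left hsmall hC
          _ = ε := mul_div_cancel₀ ε (ne_of_gt hC)
  · refine ⟨C, fun f hf => ?_⟩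
    apply ciSup_le
    intro v
    calc μ v * ‖(f ∘ φ) v‖ ≤ C * (μ (φ v) * ‖f (φ v)‖) := key f v
      _ ≤ C * wnorm μ f :=
        mul_le_mul_of_nonneg_left (le_ciSup hf.1 (φ v)) hC.le
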